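/- For all integers t ≥ 1, x_1,…,x_t ≥ 1, y_1,…,y_t ≥ 1 with ∑_{i=1}^t y_i ≥ 3 and d ∈ {0,1}, the lattice Λ_Γ is negative definite: every ξ ∈ Λ_Γ satisfies ξ·ξ ≤ 0, and ξ·ξ = 0 implies ξ = 0. -/

import Mathlib

open Finset

/-- The standard negative definite bilinear form on `ℤ^N`:
`x·y = -∑ i, x i * y i`. -/
def negForm (N : ℕ) (u v : Fin N → ℤ) : ℤ := -∑ i, u i * v i

/-- A canonical basis of `ℤ^N`: a set of `N` vectors with `e·e = -1` and
distinct elements pairwise orthogonal. -/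
def IsCanonicalBasis (N : ℕ) (E : Finset (Fin N → ℤ)) : Prop :=
  E.card = N ∧ (∀ e ∈ E, negForm N e e = -1) ∧
    ∀ e ∈ E, ∀ f ∈ E, e ≠ f → negForm N e f = 0

/-- The equivalence relation on `ℤ^N` generated by `u ~ v` iff
`u, v ∈ V` and `u·v ≠ 0`. -/
def Conn (N : ℕ) (V : Finset (Fin N → ℤ)) : (Fin N → ℤ) → (Fin N → ℤ) → Prop :=
  Relation.EqvGen fun u v => u ∈ V ∧ v ∈ V ∧ negForm N u v ≠ 0

open scoped Classical in
/-- The connected component of `v` in `V`. -/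
noncomputable def compOf (N : ℕ) (V : Finset (Fin N → ℤ)) (v : Fin N → ℤ) :
    Finset (Fin N → ℤ) :=
  V.filter fun u => Conn N V u v

/-- A circular subset of `ℤ^N`. -/
def IsCircular (N : ℕ) (V : Finset (Fin N → ℤ)) : Prop :=
  (∀ v ∈ V, 3 ≤ (compOf N V v).card) ∧
  (∀ u ∈ V, ∀ v ∈ V, u ≠ v →
    negForm N u v = -1 ∨ negForm N u v = 0 ∨ negForm N u v = 1) ∧
  (∀ v ∈ V,
    (V.filter fun u => u ≠ v ∧ (negForm N u v = 1 ∨ negForm N u v = -1)).card = 2)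

/-- `E` is a canonical basis adapted to `V`:  `∑_{v ∈ V} v = -∑_{e ∈ E} e`. -/
def IsAdaptedBasis (N : ℕ) (E V : Finset (Fin N → ℤ)) : Prop :=
  IsCanonicalBasis N E ∧ (∑ v ∈ V, v) = -∑ e ∈ E, e

open scoped Classical in
/-- A semipositive circular subset: each connected component contains exactly one
(unordered) pair of distinct vectors `u, v` with `u·v = -1`. -/
def IsSemipositive (N : ℕ) (V : Finset (Fin N → ℤ)) : Prop :=
  IsCircular N V ∧ ∀ v₀ ∈ V,
    (((compOf N V v₀) ×ˢ (compOf N V v₀)).filter fun p =>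
      p.1 ≠ p.2 ∧ negForm N p.1 p.2 = -1).card = 2

/-- A positive circular subset: `u·v ≥ 0` for all distinct `u, v ∈ V`. -/
def IsPositive (N : ℕ) (V : Finset (Fin N → ℤ)) : Prop :=
  IsCircular N V ∧ ∀ u ∈ V, ∀ v ∈ V, u ≠ v → 0 ≤ negForm N u v

/-- A single blowup of a string of nonnegative integers. -/
inductive IsBlowup : List ℕ → List ℕ → Prop
  | left (a b : ℕ) (m : List ℕ) :
      IsBlowup (a :: (m ++ [b])) (1 :: (a + 1) :: (m ++ [b + 1]))
  | middle (a b : ℕ) (p s : List ℕ) :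
      IsBlowup (p ++ a :: b :: s) (p ++ (a + 1) :: 1 :: (b + 1) :: s)
  | right (a b : ℕ) (m : List ℕ) :
      IsBlowup (a :: (m ++ [b])) ((a + 1) :: (m ++ [b + 1, 1]))

/-- An iterated blowup of `(0,0)`. -/
def IsIteratedBlowup (s : List ℕ) : Prop :=
  Relation.ReflTransGen IsBlowup [0, 0] s

/-- A `(-2)`-expansion of a string of negative integers. -/
inductive IsNeg2Expansion : List ℤ → List ℤ → Prop
  | first (l : List ℤ) (a : ℤ) :
      IsNeg2Expansion (-2 :: (l ++ [a])) (-2 :: -2 :: (l ++ [a - 1]))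
  | second (a : ℤ) (l : List ℤ) :
      IsNeg2Expansion (-2 :: a :: l) (-2 :: (a - 1) :: (l ++ [-2]))

/-- A cyclic listing of (the elements of) a connected component `C` of a circular
subset: a cyclically indexed enumeration of `C` in which consecutive elements
pair to `±1`. -/
def IsCyclicListing (N : ℕ) (C : Finset (Fin N → ℤ)) (m : ℕ)
    (w : ZMod m → (Fin N → ℤ)) : Prop :=
  C.card = m ∧ Function.Injective w ∧ (∀ i, w i ∈ C) ∧ (∀ c ∈ C, ∃ i, w i = c) ∧
    ∀ i : ZMod m, negForm N (w i) (w (i + 1)) = 1 ∨ negForm N (w i) (w (i + 1)) = -1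

/-- The index in the cyclic string at which the `i`-th block starts. -/
def blockStart {t : ℕ} (y : Fin t → ℕ) (i : Fin t) : ℕ := ∑ i' ∈ Finset.Iio i, y i'

/-- The string of squares `(-x₁-2, -2,…,-2, …, -xₜ-2, -2,…,-2)` of the lattice
`Λ_Γ`, as a function on `Fin n` (where `n = ∑ yᵢ`). -/
def sqOf {t : ℕ} (x y : Fin t → ℕ) (n : ℕ) (j : Fin n) : ℤ :=
  -2 - ∑ i : Fin t, if (j : ℕ) = blockStart y i then (x i : ℤ) else 0

/-- The Gram matrix of the lattice `Λ_Γ`: diagonal given by `sq`, consecutive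
vertices pair to `1`, the last and first vertices pair to `(-1)^d`, all other
pairs are orthogonal. -/
def gramOf (n : ℕ) (sq : Fin n → ℤ) (d : ℕ) (i j : Fin n) : ℤ :=
  if i = j then sq i
  else if (j : ℕ) = (i : ℕ) + 1 ∨ (i : ℕ) = (j : ℕ) + 1 then 1
  else if ((i : ℕ) = 0 ∧ (j : ℕ) = n - 1) ∨ ((j : ℕ) = 0 ∧ (i : ℕ) = n - 1)
    then (-1) ^ d
  else 0

def eps (n d : ℕ) (i : Fin n) : ℤ := if (i:ℕ) = n - 1 then (-1)^d else 1

lemma succ_val {n : ℕ} [NeZero n] (hn : 3 ≤ n) (i : Fin n) :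
    ((i+1 : Fin n) : ℕ) = if (i:ℕ) = n - 1 then 0 else (i:ℕ)+1 := by
  have h1 : ((1 : Fin n):ℕ) = 1 := by rw [Fin.val_one']; exact Nat.mod_eq_of_lt (by omega)
  rw [Fin.val_add, h1]
  have hi := i.isLt
  split
  · next h => rw [h, Nat.sub_add_cancel (by omega), Nat.mod_self]
  · next h => exact Nat.mod_eq_of_lt (by omega)

lemma row {n : ℕ} [NeZero n] (hn : 3 ≤ n) (sq : Fin n → ℤ) (d : ℕ) (ξ : Fin n → ℤ) (i : Fin n) :
    ∑ j, ξ i * ξ j * gramOf n sq d i j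
      = ξ i * (sq i * ξ i) + ξ i * (eps n d i * ξ (i+1)) + ξ i * (eps n d (i-1) * ξ (i-1)) := by
  have key : ∀ j : Fin n, ξ i * ξ j * gramOf n sq d i j
      = (if j = i then ξ i * (sq i * ξ j) else 0)
        + (if j = i + 1 then ξ i * (eps n d i * ξ j) else 0)
        + (if j = i - 1 then ξ i * (eps n d j * ξ j) else 0) := by
    intro j
    have hi := i.isLt
    have hj := j.isLt
    by_cases hi1 : (i:ℕ) = n - 1 <;> by_cases hj1 : (j:ℕ) = n - 1 <;>
      simp only [gramOf, eps, eq_sub_iff_add_eq, Fin.ext_iff, succ_val hn, hi1, hj1,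
        if_true, if_false, eq_self_iff_true, and_true, and_false, true_and, false_and,
        or_false, false_or, true_or, or_true, not_false_iff] <;>
      split_ifs <;> first | ring1 | (exfalso; omega)
  rw [Finset.sum_congr rfl (fun j _ => key j)]
  rw [Finset.sum_add_distrib, Finset.sum_add_distrib, Finset.sum_ite_eq', Finset.sum_ite_eq',
    Finset.sum_ite_eq']
  simp

/-- the lattice `Λ_Γ` (realized as `Fin n → ℤ` with the bilinear
form given by the Gram matrix `gramOf`) is negative definite. -/
theorem stmt_6 (t : ℕ) (ht : 1 ≤ t) (x y : Fin t → ℕ)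
    (hx : ∀ i, 1 ≤ x i) (hy : ∀ i, 1 ≤ y i)
    (n : ℕ) (hn : n = ∑ i, y i) (hn3 : 3 ≤ n)
    (d : ℕ) (hd : d = 0 ∨ d = 1) (ξ : Fin n → ℤ) :
    (∑ i, ∑ j, ξ i * ξ j * gramOf n (sqOf x y n) d i j) ≤ 0 ∧
      ((∑ i, ∑ j, ξ i * ξ j * gramOf n (sqOf x y n) d i j) = 0 → ξ = 0) := by
  haveI : NeZero n := ⟨by omega⟩
  set sq := sqOf x y n with hsqdef
  set ε := eps n d with hεdef
  have hsq2 : ∀ j, sq j ≤ -2 := by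
    intro j
    have h : (0:ℤ) ≤ ∑ i : Fin t, if (j:ℕ) = blockStart y i then (x i:ℤ) else 0 :=
      Finset.sum_nonneg (fun i _ => by split <;> simp)
    have : sq j = -2 - ∑ i : Fin t, if (j:ℕ) = blockStart y i then (x i:ℤ) else 0 := rfl
    linarith
  have hsq3 : sq (0 : Fin n) ≤ -3 := by
    set i₀ : Fin t := ⟨0, by omega⟩ with hi₀
    have hbs : blockStart y i₀ = 0 := by
      unfold blockStart
      have he : Finset.Iio i₀ = ∅ := by
        ext a
        simp only [Finset.mem_Iio, Finset.notMem_empty, iff_false, Fin.lt_def, hi₀]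
        omega
      rw [he, Finset.sum_empty]
    have hterm : (x i₀ : ℤ) ≤
        ∑ i : Fin t, if (((0:Fin n)):ℕ) = blockStart y i then (x i:ℤ) else 0 := by
      have := Finset.single_le_sum
        (f := fun i : Fin t => if (((0:Fin n)):ℕ) = blockStart y i then (x i:ℤ) else 0)
        (fun i _ => by split <;> simp) (Finset.mem_univ i₀)
      simpa [hbs] using this
    have hx0 : 1 ≤ (x i₀ : ℤ) := by exact_mod_cast hx i₀
    have : sq (0 : Fin n)
        = -2 - ∑ i : Fin t, if (((0:Fin n)):ℕ) = blockStart y i then (x i:ℤ) else 0 := rfl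
    linarith
  have hεpm : ∀ i : Fin n, ε i = 1 ∨ ε i = -1 := by
    intro i
    rw [hεdef]
    unfold eps
    rcases hd with rfl | rfl <;> split <;> simp
  have hε2 : ∀ i : Fin n, ε i * ε i = 1 := by
    intro i; rcases hεpm i with h | h <;> rw [h] <;> ring
  have key : ∑ i, ∑ j, ξ i * ξ j * gramOf n sq d i j
      = ∑ i, ((sq i + 2) * ξ i^2) - ∑ i : Fin n, (ξ i - ε i * ξ (i+1))^2 := by
    have r1 : ∑ i : Fin n, ξ (i+1) * (ε i * ξ i) = ∑ i : Fin n, ξ i * (ε (i-1) * ξ (i-1)) :=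
      Fintype.sum_equiv (Equiv.addRight 1) _ _ (fun i => by simp)
    have r2 : ∑ i : Fin n, ξ (i+1)^2 = ∑ i : Fin n, ξ i^2 :=
      Fintype.sum_equiv (Equiv.addRight 1) _ _ (fun i => by simp)
    have expand : ∀ i : Fin n, (sq i + 2) * ξ i^2 - (ξ i - ε i * ξ (i+1))^2
        = (ξ i * (sq i * ξ i) + ξ i * (ε i * ξ (i+1)) + ξ (i+1) * (ε i * ξ i))
          + (ξ i^2 - ξ (i+1)^2) := by
      intro i; linear_combination (-(ξ (i+1))^2) * hε2 i
    have lhs_eq : ∑ i, ∑ j, ξ i * ξ j * gramOf n sq d i j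
        = ∑ i : Fin n, ξ i * (sq i * ξ i) + ∑ i : Fin n, ξ i * (ε i * ξ (i+1))
          + ∑ i : Fin n, ξ (i+1) * (ε i * ξ i) := by
      rw [Finset.sum_congr rfl (fun i _ => row hn3 sq d ξ i), ← hεdef,
        Finset.sum_add_distrib, Finset.sum_add_distrib, ← r1]
    have rhs_eq : ∑ i, ((sq i + 2) * ξ i^2) - ∑ i : Fin n, (ξ i - ε i * ξ (i+1))^2
        = (∑ i : Fin n, ξ i * (sq i * ξ i) + ∑ i : Fin n, ξ i * (ε i * ξ (i+1))
            + ∑ i : Fin n, ξ (i+1) * (ε i * ξ i))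
          + (∑ i : Fin n, ξ i^2 - ∑ i : Fin n, ξ (i+1)^2) := by
      rw [← Finset.sum_sub_distrib, Finset.sum_congr rfl (fun i _ => expand i),
        Finset.sum_add_distrib, Finset.sum_add_distrib, Finset.sum_add_distrib,
        Finset.sum_sub_distrib]
    rw [lhs_eq, rhs_eq, r2, sub_self, add_zero]
  have h1 : ∑ i, (sq i + 2) * ξ i^2 ≤ 0 :=
    Finset.sum_nonpos (fun i _ =>
      mul_nonpos_of_nonpos_of_nonneg (by have := hsq2 i; linarith) (sq_nonneg _))
  have h2 : 0 ≤ ∑ i : Fin n, (ξ i - ε i * ξ (i+1))^2 :=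
    Finset.sum_nonneg fun i _ => sq_nonneg _
  constructor
  · rw [key]; linarith
  · intro h0
    rw [key] at h0
    have hA : ∑ i, (sq i + 2) * ξ i^2 = 0 := by linarith
    have hB : ∑ i : Fin n, (ξ i - ε i * ξ (i+1))^2 = 0 := by linarith
    have hBall : ∀ i : Fin n, ξ i = ε i * ξ (i+1) := by
      intro i
      have h := (Finset.sum_eq_zero_iff_of_nonneg
        (f := fun i : Fin n => (ξ i - ε i * ξ (i+1))^2)
        (fun i _ => sq_nonneg _)).1 hB i (Finset.mem_univ i)
      have h' : ξ i - ε i * ξ (i+1) = 0 := by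
        have := sq_eq_zero_iff.1 h
        exact this
      linarith
    have hξ0 : ξ 0 = 0 := by
      have h := (Finset.sum_eq_zero_iff_of_nonpos
        (f := fun i : Fin n => (sq i + 2) * ξ i^2)
        (fun i _ => mul_nonpos_of_nonpos_of_nonneg (by have := hsq2 i; linarith)
          (sq_nonneg _))).1 hA (0:Fin n) (Finset.mem_univ _)
      have hne : sq (0:Fin n) + 2 ≠ 0 := by intro hc; linarith [hsq3]
      have := mul_eq_zero.1 h
      rcases this with hc | hc
      · exact absurd hc hne
      · exact pow_eq_zero_iff (by norm_num) |>.1 hc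
    have habs : ∀ i : Fin n, |ξ i| = |ξ (i+1)| := by
      intro i
      rw [hBall i, abs_mul]
      rcases hεpm i with h | h <;> rw [h] <;> simp
    open Fin.NatCast in
    have hall : ∀ k : ℕ, |ξ (k : Fin n)| = 0 := by
      intro k
      induction k with
      | zero => simpa using abs_eq_zero.2 hξ0
      | succ k ih =>
        have hc : ((k+1 : ℕ) : Fin n) = (k : Fin n) + 1 := by push_cast; ring
        rw [hc, ← habs]; exact ih
    funext i
    open Fin.NatCast in
    have h := hall i.val
    rw [Fin.cast_val_eq_self] at h
    simpa using abs_eq_zero.1 h
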